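/- arXiv:2302.00466 — 3 statements merged into one kernel-verified Lean document; each statement's English description precedes it below -/
import Mathlib

section
/- Define b₁ = (1/√2)·sin(t/√2)cos(t/√2)/(cos²(t/√2)+sinh²(h/√2)) and b₂ = (1/√2)·sinh(h/√2)cosh(h/√2)/(cos²(t/√2)+sinh²(h/√2)), and set a₁ = cos(t/√2)·cosh(h/√2), a₂ = sin(t/√2)·sinh(h/√2). Then (a₁ + i·a₂)² · (2(b₁ − i·b₂)² + 1) = 1. -/
lemma aux7 (c s S C r : ℂ) (hpy : s^2 + c^2 = 1) (hhy : C^2 - S^2 = 1)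
    (hr : r^2 = 2) (hr0 : r ≠ 0) (hD : c^2 + S^2 ≠ 0) :
    (c*C + Complex.I*(s*S))^2 *
      (2*((1/r*(s*c)/(c^2+S^2)) - Complex.I*(1/r*(S*C))/(c^2+S^2))^2 + 1) = 1 := by
  have hI := Complex.I_sq
  have key : (c*C + Complex.I*(s*S)) * (s*c - Complex.I*(S*C))
      = (c^2+S^2)*(s*C - Complex.I*(c*S)) := by
    linear_combination (Complex.I*c*S)*hpy - (Complex.I*c*S)*hhy - s*S^2*C*hI
  have key2 : (s*C - Complex.I*(c*S))^2 + (c*C + Complex.I*(s*S))^2 = 1 := by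
    linear_combination (C^2+Complex.I^2*S^2)*hpy + S^2*hI + hhy
  field_simp
  linear_combination 2*((c*C + Complex.I*(s*S))*(s*c - Complex.I*(S*C)) +
    (c^2+S^2)*(s*C - Complex.I*(c*S)))*key + r^2*(c^2+S^2)^2*key2 -
    (s*C - Complex.I*(c*S))^2*(c^2+S^2)^2*hr

/-- With `b₁, b₂` the Case-3 shape-operator components and
`a₁ = cos(t/√2)cosh(h/√2)`, `a₂ = sin(t/√2)sinh(h/√2)`, one has
`(a₁ + i a₂)²·(2(b₁ − i b₂)² + 1) = 1`. -/
theorem stmt_7 (t h : ℝ)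
    (hden : Real.cos (t / Real.sqrt 2) ^ 2 + Real.sinh (h / Real.sqrt 2) ^ 2 ≠ 0) :
    let b₁ : ℝ := (1 / Real.sqrt 2) * (Real.sin (t / Real.sqrt 2) * Real.cos (t / Real.sqrt 2)) /
      (Real.cos (t / Real.sqrt 2) ^ 2 + Real.sinh (h / Real.sqrt 2) ^ 2)
    let b₂ : ℝ := (1 / Real.sqrt 2) * (Real.sinh (h / Real.sqrt 2) * Real.cosh (h / Real.sqrt 2)) /
      (Real.cos (t / Real.sqrt 2) ^ 2 + Real.sinh (h / Real.sqrt 2) ^ 2)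
    let a₁ : ℝ := Real.cos (t / Real.sqrt 2) * Real.cosh (h / Real.sqrt 2)
    let a₂ : ℝ := Real.sin (t / Real.sqrt 2) * Real.sinh (h / Real.sqrt 2)
    ((a₁ : ℂ) + Complex.I * a₂) ^ 2 * (2 * ((b₁ : ℂ) - Complex.I * b₂) ^ 2 + 1) = 1 := by
  intro b₁ b₂ a₁ a₂
  set x := t / Real.sqrt 2 with hx
  set y := h / Real.sqrt 2 with hy
  set c := Real.cos x with hc
  set s := Real.sin x with hs
  set S := Real.sinh y with hS
  set C := Real.cosh y with hC
  have hr : ((Real.sqrt 2 : ℝ) : ℂ) ^ 2 = 2 := by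
    norm_cast; exact Real.sq_sqrt (by norm_num)
  have hr0 : ((Real.sqrt 2 : ℝ) : ℂ) ≠ 0 := by
    intro hcon; rw [hcon] at hr; norm_num at hr
  have hpy : ((s : ℝ) : ℂ)^2 + ((c : ℝ):ℂ)^2 = 1 := by
    norm_cast; exact Real.sin_sq_add_cos_sq x
  have hhy : ((C : ℝ):ℂ)^2 - ((S : ℝ):ℂ)^2 = 1 := by
    norm_cast; exact Real.cosh_sq_sub_sinh_sq y
  have hD : ((c : ℝ):ℂ)^2 + ((S : ℝ):ℂ)^2 ≠ 0 := by exact_mod_cast hden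
  simp only [b₁, b₂, a₁, a₂]
  push_cast [-Complex.ofReal_cos, -Complex.ofReal_sin, -Complex.ofReal_sinh, -Complex.ofReal_cosh]
  linear_combination aux7 (c : ℂ) (s : ℂ) (S : ℂ) (C : ℂ) ((Real.sqrt 2 : ℝ) : ℂ)
    hpy hhy hr hr0 hD
end

section
/- Let a, b ∈ S² ⊂ ℝ³ be unit vectors and define M̂ = {(p,q) ∈ S²×S² : ⟨p,a⟩² + ⟨q,b⟩² = 1}. Let a = (0,0,1), b = (0,0,−1), and consider the map Ψ(t₁,t₂,t₃) = ( ((cos(t₁/√2)−sin(t₁/√2))/√2)·(cos t₂, sin t₂, 0) + ((cos(t₁/√2)+sin(t₁/√2))/√2)·a, ((cos(t₁/√2)+sin(t₁/√2))/√2)·(cos t₃, sin t₃, 0) + ((cos(t₁/√2)−sin(t₁/√2))/√2)·b ). Then Ψ maps ℝ³ into M̂, i.e., both components lie in S² and ⟨p,a⟩² + ⟨q,b⟩² = 1 for (p,q) = Ψ(t₁,t₂,t₃). -/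
open scoped BigOperators

/-- The explicit parametrization `Ψ` maps `ℝ³` into
`M̂ = {(p,q) ∈ S²×S² : ⟨p,a⟩² + ⟨q,b⟩² = 1}` with `a = (0,0,1)`, `b = (0,0,−1)`. -/
theorem stmt_12 (t₁ t₂ t₃ : ℝ) :
    let a : Fin 3 → ℝ := ![0, 0, 1]
    let b : Fin 3 → ℝ := ![0, 0, -1]
    let p : Fin 3 → ℝ := fun i =>
      ((Real.cos (t₁ / Real.sqrt 2) - Real.sin (t₁ / Real.sqrt 2)) / Real.sqrt 2) *
          (![Real.cos t₂, Real.sin t₂, 0] i) +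
        ((Real.cos (t₁ / Real.sqrt 2) + Real.sin (t₁ / Real.sqrt 2)) / Real.sqrt 2) * a i
    let q : Fin 3 → ℝ := fun i =>
      ((Real.cos (t₁ / Real.sqrt 2) + Real.sin (t₁ / Real.sqrt 2)) / Real.sqrt 2) *
          (![Real.cos t₃, Real.sin t₃, 0] i) +
        ((Real.cos (t₁ / Real.sqrt 2) - Real.sin (t₁ / Real.sqrt 2)) / Real.sqrt 2) * b i
    (∑ i, p i ^ 2 = 1) ∧ (∑ i, q i ^ 2 = 1) ∧
      (∑ i, p i * a i) ^ 2 + (∑ i, q i * b i) ^ 2 = 1 := by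
  intro a b p q
  have h2 : Real.sqrt 2 ^ 2 = 2 := Real.sq_sqrt (by norm_num)
  have h1 := Real.sin_sq_add_cos_sq (t₁ / Real.sqrt 2)
  have hc2 := Real.sin_sq_add_cos_sq t₂
  have hc3 := Real.sin_sq_add_cos_sq t₃
  have hne : Real.sqrt 2 ≠ 0 := by positivity
  refine ⟨?_, ?_, ?_⟩ <;>
  · simp only [p, q, a, b, Fin.sum_univ_three, Matrix.cons_val_zero, Matrix.cons_val_one,
      Matrix.head_cons, Matrix.cons_val_two, Matrix.tail_cons]
    field_simp
    nlinarith [h1, hc2, hc3, h2]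
end

section
/- There are no real numbers κ < 0, C ∈ (−1,1), b₁, b₄, b₆ with b₆ ≠ 0 satisfying b₁b₄ = κ, b₁b₆ = κ − (1−C)/2, and b₄b₆ = κ − (1+C)/2. -/
/-- Nonexistence step: there are no real solutions with `κ < 0`, `C ∈ (−1,1)`,
`b₆ ≠ 0` to the curvature relations. -/
theorem stmt_19 :
    ¬ ∃ (κ C b₁ b₄ b₆ : ℝ), κ < 0 ∧ C ∈ Set.Ioo (-1 : ℝ) 1 ∧ b₆ ≠ 0 ∧
      b₁ * b₄ = κ ∧ b₁ * b₆ = κ - (1 - C) / 2 ∧ b₄ * b₆ = κ - (1 + C) / 2 := by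
  rintro ⟨κ, C, b₁, b₄, b₆, hκ, ⟨hC1, hC2⟩, hb₆, h1, h2, h3⟩
  have hsq : b₆ ^ 2 > 0 := by positivity
  nlinarith [mul_pos (neg_pos.2 hκ) hsq, sq_nonneg (2*κ - 1 - C), sq_nonneg (2*κ - 1 + C), mul_self_nonneg b₆, sq_nonneg (b₁*b₆ - b₄*b₆)]
end
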